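/- Let S, T : [−1,1] → ℝ be differentiable, U : [−1,1] → ℝ differentiable, λ₂, λ₃ ∈ ℝ, and suppose S = −(λ₃ + λ₂T)e^{2U} and T'' − 2U'T' + λ₂(λ₃ + λ₂T)e^{4U} = 0 hold on (−1,1). Then the function γ(x) := −[S(x)² + T'(x)²]e^{-4U(x)} is constant. -/

import Mathlib

open Real Set

/-- If S = −(λ₃ + λ₂T)e^{2U} and T'' − 2U'T' + λ₂(λ₃ + λ₂T)e^{4U} = 0
hold on (−1,1), then γ(x) := −[S(x)² + T'(x)²]e^{−4U(x)} is constant on [−1,1]. -/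
theorem stmt_10 (S T T' T'' U U' : ℝ → ℝ) (lam₂ lam₃ : ℝ)
    (hT : ∀ x ∈ Icc (-1:ℝ) 1, HasDerivAt T (T' x) x)
    (hT' : ∀ x ∈ Icc (-1:ℝ) 1, HasDerivAt T' (T'' x) x)
    (hU : ∀ x ∈ Icc (-1:ℝ) 1, HasDerivAt U (U' x) x)
    (hScont : ContinuousOn S (Icc (-1:ℝ) 1))
    (hSdef : ∀ x ∈ Ioo (-1:ℝ) 1, S x = -(lam₃ + lam₂ * T x) * Real.exp (2 * U x))
    (hODE : ∀ x ∈ Ioo (-1:ℝ) 1,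
      T'' x - 2 * U' x * T' x + lam₂ * (lam₃ + lam₂ * T x) * Real.exp (4 * U x) = 0) :
    ∃ c : ℝ, ∀ x ∈ Icc (-1:ℝ) 1,
      -((S x)^2 + (T' x)^2) * Real.exp (-4 * U x) = c := by
  set f : ℝ → ℝ := fun x => -((S x)^2 + (T' x)^2) * Real.exp (-4 * U x) with hf
  set h : ℝ → ℝ := fun x => -((lam₃ + lam₂ * T x)^2 + (T' x)^2 * Real.exp (-4 * U x)) with hh
  -- continuity of f on Icc
  have hT'c : ContinuousOn T' (Icc (-1:ℝ) 1) := fun x hx =>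
    (hT' x hx).continuousAt.continuousWithinAt
  have hUc : ContinuousOn U (Icc (-1:ℝ) 1) := fun x hx =>
    (hU x hx).continuousAt.continuousWithinAt
  have hfc : ContinuousOn f (Icc (-1:ℝ) 1) := by
    apply ContinuousOn.mul
    · exact ((hScont.pow 2).add (hT'c.pow 2)).neg
    · exact Real.continuous_exp.comp_continuousOn (continuousOn_const.mul hUc)
  -- derivative zero on Ioo
  have hderiv : ∀ x ∈ Ioo (-1:ℝ) 1, HasDerivAt f 0 x := by
    intro x hx
    have hx' : x ∈ Icc (-1:ℝ) 1 := Ioo_subset_Icc_self hx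
    have hP : HasDerivAt (fun y => lam₃ + lam₂ * T y) (lam₂ * T' x) x := by
      exact ((hT x hx').const_mul lam₂).const_add lam₃
    have hE : HasDerivAt (fun y => Real.exp (-4 * U y)) (Real.exp (-4 * U x) * (-4 * U' x)) x :=
      ((hU x hx').const_mul (-4)).exp
    have hB : HasDerivAt (fun y => (T' y)^2) (2 * T' x ^ 1 * T'' x) x := (hT' x hx').pow 2
    have hhd : HasDerivAt h
        (-(2 * (lam₃ + lam₂ * T x) ^ 1 * (lam₂ * T' x) +
          (2 * T' x ^ 1 * T'' x * Real.exp (-4 * U x) +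
            (T' x)^2 * (Real.exp (-4 * U x) * (-4 * U' x))))) x :=
      ((hP.pow 2).add (hB.mul hE)).neg
    have e2 : Real.exp (4 * U x) * Real.exp (-4 * U x) = 1 := by
      rw [← Real.exp_add]
      norm_num
    have hd0 : (-(2 * (lam₃ + lam₂ * T x) ^ 1 * (lam₂ * T' x) +
          (2 * T' x ^ 1 * T'' x * Real.exp (-4 * U x) +
            (T' x)^2 * (Real.exp (-4 * U x) * (-4 * U' x))))) = 0 := by
      have hode := hODE x hx
      linear_combination (-(2 * T' x * Real.exp (-4 * U x))) * hode +
        (2 * lam₂ * (lam₃ + lam₂ * T x) * T' x) * e2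
    rw [hd0] at hhd
    have hfeq : f =ᶠ[nhds x] h := by
      filter_upwards [Ioo_mem_nhds hx.1 hx.2] with y hy
      have e2' : Real.exp (2 * U y) ^ 2 * Real.exp (-4 * U y) = 1 := by
        have harg : 2 * U y + 2 * U y + -4 * U y = 0 := by ring
        rw [sq, ← Real.exp_add, ← Real.exp_add, harg, Real.exp_zero]
      simp only [hf, hh, hSdef y hy]
      linear_combination (-(lam₃ + lam₂ * T y)^2) * e2'
    exact hhd.congr_of_eventuallyEq hfeq
  -- MVT argument
  refine ⟨f (-1), fun x hx => ?_⟩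
  rcases eq_or_lt_of_le hx.1 with heq | hlt
  · rw [← heq]
  · have hsub : Icc (-1:ℝ) x ⊆ Icc (-1:ℝ) 1 := Icc_subset_Icc le_rfl hx.2
    obtain ⟨c, hc, hc0⟩ := exists_hasDerivAt_eq_slope f (fun _ => 0) hlt
      (hfc.mono hsub)
      (fun y hy => hderiv y ⟨hy.1, lt_of_lt_of_le hy.2 hx.2⟩)
    have hne : x - (-1) ≠ 0 := by linarith
    rw [eq_comm, div_eq_zero_iff] at hc0
    rcases hc0 with hc0 | hc0
    · show f x = f (-1)
      linarith
    · exact absurd hc0 hne
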